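/- Let h be a Lie algebra with an lcK structure (J,Ω,θ), V a real vector space of dimension 2n with Hermitian structure (J0,⟨·,·⟩0), and π: h → End(V) a representation of the form π(X) = -(1/2)θ(X)·Id + ρ(X) with ρ(X) ∈ u(n) (skew-symmetric and commuting with J0) for all X. Then on the semidirect product g = h ⋉_π V, the extended structure J'|_h = J, J'|_V = J0, Ω'|_{h×h}=Ω, Ω'|_{V×V}=ω0 (the fundamental form of (J0,⟨·,·⟩0)), Ω'(h,V)=0, θ'|_h=θ, θ'|_V=0 is an lcK structure. -/
import Mathlib


/-- An lcK structure on a real Lie algebra: an integrable complex structure `J`,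
a nonzero closed 1-form `θ`, and a `J`-invariant positive 2-form `Ω` with
`dΩ = θ ∧ Ω` (Chevalley–Eilenberg conventions). -/
def IsLcK (L : Type*) [LieRing L] [LieAlgebra ℝ L]
    (J : L →ₗ[ℝ] L) (Ω : L →ₗ[ℝ] L →ₗ[ℝ] ℝ) (θ : L →ₗ[ℝ] ℝ) : Prop :=
  (∀ x : L, J (J x) = -x) ∧
  (∀ x y : L, -⁅x, y⁆ + ⁅J x, J y⁆ - J ⁅J x, y⁆ - J ⁅x, J y⁆ = 0) ∧
  θ ≠ 0 ∧
  (∀ x y : L, θ ⁅x, y⁆ = 0) ∧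
  (∀ x y : L, Ω x y = - Ω y x) ∧
  (∀ x y z : L, -Ω ⁅x, y⁆ z + Ω ⁅x, z⁆ y - Ω ⁅y, z⁆ x
      = θ x * Ω y z - θ y * Ω x z + θ z * Ω x y) ∧
  (∀ x y : L, Ω (J x) (J y) = Ω x y) ∧
  (∀ x : L, x ≠ 0 → 0 < Ω x (J x))

set_option maxHeartbeats 1600000 in
/-- The lcK extension: if `h` has an lcK structure `(J,Ω,θ)` and `V` is a Hermitian
vector space of dimension `2n`, with a representation `π = -(1/2)θ·Id + ρ`,
`ρ(X) ∈ u(n)`, then the natural extended structure on `g = h ⋉_π V` is lcK. -/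
theorem stmt9
    (H G : Type*) [LieRing H] [LieAlgebra ℝ H] [LieRing G] [LieAlgebra ℝ G]
    (V : Type*) [AddCommGroup V] [Module ℝ V]
    (n : ℕ) (hn : Module.finrank ℝ V = 2 * n)
    (J : H →ₗ[ℝ] H) (Ω : H →ₗ[ℝ] H →ₗ[ℝ] ℝ) (θ : H →ₗ[ℝ] ℝ)
    (hlcK : IsLcK H J Ω θ)
    (J0 : V →ₗ[ℝ] V) (ip : V →ₗ[ℝ] V →ₗ[ℝ] ℝ)
    (hJ0 : ∀ v : V, J0 (J0 v) = -v)
    (hipsym : ∀ v w : V, ip v w = ip w v)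
    (hippos : ∀ v : V, v ≠ 0 → 0 < ip v v)
    (hherm : ∀ v w : V, ip (J0 v) (J0 w) = ip v w)
    (π : H → V →ₗ[ℝ] V) (ρ : H → V →ₗ[ℝ] V)
    (hπ : ∀ X : H, π X = (-(1 / 2 : ℝ) * θ X) • (LinearMap.id : V →ₗ[ℝ] V) + ρ X)
    (hρskew : ∀ (X : H) (v w : V), ip (ρ X v) w = - ip v (ρ X w))
    (hρJ : ∀ (X : H) (v : V), ρ X (J0 v) = J0 (ρ X v))
    -- `G` is the semidirect product `h ⋉_π V`:
    (i : H →ₗ[ℝ] G) (p : V →ₗ[ℝ] G)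
    (hsplit : ∀ g : G, ∃! xv : H × V, g = i xv.1 + p xv.2)
    (hbii : ∀ X Y : H, ⁅i X, i Y⁆ = i ⁅X, Y⁆)
    (hbip : ∀ (X : H) (v : V), ⁅i X, p v⁆ = p (π X v))
    (hbpp : ∀ v w : V, ⁅p v, p w⁆ = 0)
    -- the extended structure:
    (J' : G →ₗ[ℝ] G) (Ω' : G →ₗ[ℝ] G →ₗ[ℝ] ℝ) (θ' : G →ₗ[ℝ] ℝ)
    (hJ'i : ∀ X : H, J' (i X) = i (J X)) (hJ'p : ∀ v : V, J' (p v) = p (J0 v))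
    (hΩ'hh : ∀ X Y : H, Ω' (i X) (i Y) = Ω X Y)
    (hΩ'vv : ∀ v w : V, Ω' (p v) (p w) = ip (J0 v) w)
    (hΩ'hv : ∀ (X : H) (v : V), Ω' (i X) (p v) = 0)
    (hΩ'vh : ∀ (v : V) (X : H), Ω' (p v) (i X) = 0)
    (hθ'i : ∀ X : H, θ' (i X) = θ X) (hθ'p : ∀ v : V, θ' (p v) = 0) :
    IsLcK G J' Ω' θ' := by
  obtain ⟨hJJ, hNij, hθne, hθcl, hΩs, hdΩ, hΩJ, hΩpos⟩ := hlcK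
  -- π commutes with J0
  have hπJ : ∀ (X : H) (v : V), π X (J0 v) = J0 (π X v) := by
    intro X v
    rw [hπ]
    simp [hρJ, map_add, map_smul]
  -- ω0 skew
  have hωskew : ∀ v w : V, ip (J0 v) w = - ip (J0 w) v := by
    intro v w
    calc ip (J0 v) w = ip w (J0 v) := hipsym _ _
      _ = ip (J0 w) (J0 (J0 v)) := (hherm w (J0 v)).symm
      _ = ip (J0 w) (-v) := by rw [hJ0]
      _ = - ip (J0 w) v := by simp
  -- infinitesimal conformal invariance
  have hskewπ : ∀ (X : H) (v w : V),
      ip (J0 (π X v)) w + ip (J0 v) (π X w) = -θ X * ip (J0 v) w := by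
    intro X v w
    rw [hπ]
    simp only [LinearMap.add_apply, LinearMap.smul_apply, LinearMap.id_apply,
      map_add, map_smul, LinearMap.map_smul₂, smul_eq_mul]
    have h1 : ip (J0 (ρ X v)) w = - ip (J0 v) (ρ X w) := by
      rw [← hρJ, hρskew]
    rw [h1]
    ring
  -- decomposition
  have hdec : ∀ g : G, ∃ X v, g = i X + p v := by
    intro g
    obtain ⟨xv, h1, _⟩ := hsplit g
    exact ⟨xv.1, xv.2, h1⟩
  have hzero : ∀ (X : H) (v : V), i X + p v = 0 → X = 0 ∧ v = 0 := by
    intro X v h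
    obtain ⟨xv, h1, hu⟩ := hsplit (0 : G)
    have e1 : (X, v) = xv := hu (X, v) h.symm
    have e2 : ((0 : H), (0 : V)) = xv := hu (0, 0) (by simp)
    have := e1.trans e2.symm
    exact ⟨congrArg Prod.fst this, congrArg Prod.snd this⟩
  -- bracket formula
  have hbr : ∀ (X : H) (v : V) (Y : H) (w : V),
      ⁅i X + p v, i Y + p w⁆ = i ⁅X, Y⁆ + p (π X w - π Y v) := by
    intro X v Y w
    have hpv : ⁅p v, i Y⁆ = -p (π Y v) := by
      rw [← lie_skew, hbip]
    rw [add_lie, lie_add, lie_add, hbii, hbip, hpv, hbpp, map_sub]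
    abel
  -- Ω' formula
  have hΩe : ∀ (X : H) (v : V) (Y : H) (w : V),
      Ω' (i X + p v) (i Y + p w) = Ω X Y + ip (J0 v) w := by
    intro X v Y w
    simp [hΩ'hh, hΩ'vv, hΩ'hv, hΩ'vh]
  have hJe : ∀ (X : H) (v : V), J' (i X + p v) = i (J X) + p (J0 v) := by
    intro X v
    rw [map_add, hJ'i, hJ'p]
  have hθe : ∀ (X : H) (v : V), θ' (i X + p v) = θ X := by
    intro X v
    rw [map_add, hθ'i, hθ'p, add_zero]
  refine ⟨?_, ?_, ?_, ?_, ?_, ?_, ?_, ?_⟩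
  · intro x
    obtain ⟨X, v, rfl⟩ := hdec x
    rw [hJe, hJe, hJJ, hJ0, map_neg, map_neg]
    abel
  · intro x y
    obtain ⟨X, v, rfl⟩ := hdec x
    obtain ⟨Y, w, rfl⟩ := hdec y
    rw [hJe, hJe, hbr, hbr, hbr, hbr, hJe, hJe]
    have hH : -⁅X, Y⁆ + ⁅J X, J Y⁆ - J ⁅J X, Y⁆ - J ⁅X, J Y⁆ = 0 := hNij X Y
    have hV : -(π X w - π Y v) + (π (J X) (J0 w) - π (J Y) (J0 v))
        - J0 (π (J X) w - π Y (J0 v)) - J0 (π X (J0 w) - π (J Y) v) = 0 := by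
      rw [hπJ, hπJ, map_sub, map_sub, hπJ, hπJ, hJ0, hJ0]
      abel
    have : i (-⁅X, Y⁆ + ⁅J X, J Y⁆ - J ⁅J X, Y⁆ - J ⁅X, J Y⁆)
        + p (-(π X w - π Y v) + (π (J X) (J0 w) - π (J Y) (J0 v))
          - J0 (π (J X) w - π Y (J0 v)) - J0 (π X (J0 w) - π (J Y) v)) = 0 := by
      rw [hH, hV, map_zero, map_zero, add_zero]
    simp only [map_add, map_sub, map_neg] at this ⊢
    abel_nf at this ⊢
    exact this
  · intro h0
    obtain ⟨X, hX⟩ : ∃ X : H, θ X ≠ 0 := by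
      by_contra hc
      push_neg at hc
      exact hθne (LinearMap.ext fun X => by rw [hc X]; rfl)
    apply hX
    rw [← hθ'i X, h0]
    rfl
  · intro x y
    obtain ⟨X, v, rfl⟩ := hdec x
    obtain ⟨Y, w, rfl⟩ := hdec y
    rw [hbr, map_add, hθ'i, hθ'p, hθcl, add_zero]
  · intro x y
    obtain ⟨X, v, rfl⟩ := hdec x
    obtain ⟨Y, w, rfl⟩ := hdec y
    rw [hΩe, hΩe, hΩs, hωskew]
    ring
  · intro x y z
    obtain ⟨X, u, rfl⟩ := hdec x
    obtain ⟨Y, v, rfl⟩ := hdec y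
    obtain ⟨Z, w, rfl⟩ := hdec z
    rw [hbr, hbr, hbr, hΩe, hΩe, hΩe, hΩe, hΩe, hΩe, hθe, hθe, hθe]
    simp only [map_sub, LinearMap.sub_apply, LinearMap.map_sub₂]
    have F1 := hskewπ X v w
    have F2 := hskewπ Y u w
    have F3 := hskewπ Z u v
    have G1 : ip (J0 (π X w)) v = - ip (J0 v) (π X w) := hωskew _ _
    have G2 : ip (J0 (π Y w)) u = - ip (J0 u) (π Y w) := hωskew _ _
    have G3 : ip (J0 (π Z v)) u = - ip (J0 u) (π Z v) := hωskew _ _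
    have hH := hdΩ X Y Z
    linarith [hH, F1, F2, F3, G1, G2, G3]
  · intro x y
    obtain ⟨X, v, rfl⟩ := hdec x
    obtain ⟨Y, w, rfl⟩ := hdec y
    rw [hJe, hJe, hΩe, hΩe, hΩJ, hherm]
  · intro x hx
    obtain ⟨X, v, rfl⟩ := hdec x
    rw [hJe, hΩe, hherm]
    have hne : X ≠ 0 ∨ v ≠ 0 := by
      by_contra hc
      push_neg at hc
      obtain ⟨rfl, rfl⟩ := hc
      exact hx (by simp)
    have h1 : 0 ≤ Ω X (J X) := by
      rcases eq_or_ne X 0 with h | h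
      · simp [h]
      · exact le_of_lt (hΩpos X h)
    have h2 : 0 ≤ ip v v := by
      rcases eq_or_ne v 0 with h | h
      · simp [h]
      · exact le_of_lt (hippos v h)
    rcases hne with h | h
    · have := hΩpos X h
      linarith
    · have := hippos v h
      linarith
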